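/- Let T ∈ B(H), c ∈ (0,1), and let E be the spectral projection of |T| associated with [0, c]. If I − E has finite rank, then for every b ∈ [0, 1 − c), the spectral projection F of |I − T| associated with [0, b] has finite rank. -/

import Mathlib

/-- Let `c ∈ (0,1)` and let `E` be the spectral projection of `|T|` for `[0, c]`
(an orthogonal projection with `‖Tξ‖ ≤ c‖ξ‖` on its range and `‖Tξ‖ ≥ c‖ξ‖` on the
range of `I - E`). If `I - E` has finite rank, then for every `b ∈ [0, 1 - c)` the
spectral projection `F` of `|I - T|` for `[0, b]` has finite rank. -/
theorem stmt9 {H : Type*} [NormedAddCommGroup H] [InnerProductSpace ℂ H]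
    [CompleteSpace H] (T E F : H →L[ℂ] H) (c b : ℝ)
    (hc : 0 < c) (hc1 : c < 1) (hb0 : 0 ≤ b) (hb : b < 1 - c)
    (hE1 : IsIdempotentElem E) (hE2 : IsSelfAdjoint E)
    (hEle : ∀ ξ ∈ LinearMap.range (E : H →ₗ[ℂ] H), ‖T ξ‖ ≤ c * ‖ξ‖)
    (hEge : ∀ ξ ∈ LinearMap.range ((1 - E : H →L[ℂ] H) : H →ₗ[ℂ] H), c * ‖ξ‖ ≤ ‖T ξ‖)
    (hEfin : FiniteDimensional ℂ ↥(LinearMap.range ((1 - E : H →L[ℂ] H) : H →ₗ[ℂ] H)))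
    (hF1 : IsIdempotentElem F) (hF2 : IsSelfAdjoint F)
    (hFle : ∀ ξ ∈ LinearMap.range (F : H →ₗ[ℂ] H), ‖(1 - T) ξ‖ ≤ b * ‖ξ‖)
    (hFge : ∀ ξ ∈ LinearMap.range ((1 - F : H →L[ℂ] H) : H →ₗ[ℂ] H), b * ‖ξ‖ ≤ ‖(1 - T) ξ‖) :
    FiniteDimensional ℂ ↥(LinearMap.range (F : H →ₗ[ℂ] H)) := by
  -- map ξ ↦ (1-E)ξ from range F into range (1-E)
  let g : ↥(LinearMap.range (F : H →ₗ[ℂ] H)) →ₗ[ℂ] ↥(LinearMap.range ((1 - E : H →L[ℂ] H) : H →ₗ[ℂ] H)) :=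
    LinearMap.codRestrict (LinearMap.range ((1 - E : H →L[ℂ] H) : H →ₗ[ℂ] H))
      (((1 - E : H →L[ℂ] H) : H →ₗ[ℂ] H).comp (LinearMap.range (F : H →ₗ[ℂ] H)).subtype)
      (fun x => ⟨x, rfl⟩)
  have hg : Function.Injective g := by
    rw [← LinearMap.ker_eq_bot, LinearMap.ker_eq_bot']
    rintro ⟨ξ, hξ⟩ h
    have h0 : (1 - E : H →L[ℂ] H) ξ = 0 := congrArg Subtype.val h
    have hEξ : E ξ = ξ := by
      have : ξ - E ξ = 0 := by simpa using h0
      exact (sub_eq_zero.mp this).symm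
    have hξE : ξ ∈ LinearMap.range (E : H →ₗ[ℂ] H) := ⟨ξ, hEξ⟩
    have h1 : ‖T ξ‖ ≤ c * ‖ξ‖ := hEle ξ hξE
    have h2 : ‖(1 - T : H →L[ℂ] H) ξ‖ ≤ b * ‖ξ‖ := hFle ξ hξ
    have h3 : (1 - T : H →L[ℂ] H) ξ = ξ - T ξ := by simp
    have h4 : ‖ξ‖ ≤ ‖ξ - T ξ‖ + ‖T ξ‖ := by
      simpa using norm_add_le (ξ - T ξ) (T ξ)
    have h5 : ‖ξ‖ ≤ (b + c) * ‖ξ‖ := by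
      rw [h3] at h2; nlinarith
    have h6 : ‖ξ‖ = 0 := by nlinarith [norm_nonneg ξ]
    exact Subtype.ext (norm_eq_zero.mp h6)
  exact FiniteDimensional.of_injective g hg
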